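/- Let M be a finitely generated free ℤ-module of rank r with a quadratic norm (inner product) on M ⊗ ℝ. If M is generated by elements of norm at most 1, then χ(M) ≥ log V(r), where χ(M) = log(vol(unit ball)/vol(fundamental domain)) and V(r) is the volume of the unit ball in Euclidean space ℝ^r. -/

import Mathlib

open MeasureTheory Module Submodule
open scoped RealInnerProductSpace

theorem covolume_le_one_of_gen
    {E : Type*} [NormedAddCommGroup E] [InnerProductSpace ℝ E] [FiniteDimensional ℝ E]
    [MeasurableSpace E] [BorelSpace E]
    (M : Submodule ℤ E) [DiscreteTopology M] [IsZLattice ℝ M]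
    (hgen : ∃ s : Set E, Submodule.span ℤ s = M ∧ ∀ x ∈ s, ‖x‖ ≤ 1) :
    ZLattice.covolume M ≤ 1 := by
  classical
  obtain ⟨s, hs, hnorm⟩ := hgen
  have hfin : Module.Finite ℤ M := ZLattice.module_finite ℝ M
  have hfree : Module.Free ℤ M := ZLattice.module_free ℝ M
  set n := finrank ℝ E with hn
  have hspan : span ℝ s = ⊤ := by
    rw [← span_span_of_tower (R := ℤ) (S := ℝ), hs, IsZLattice.span_top]
  obtain ⟨t, hts, htspan, htli⟩ := exists_linearIndependent ℝ s
  rw [hspan] at htspan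
  have htfin : t.Finite := htli.setFinite
  haveI := htfin.fintype
  let vb : Basis t ℝ E := Basis.mk htli (by rw [Subtype.range_coe]; exact htspan.ge)
  have hcard : Fintype.card t = n := by
    rw [hn, finrank_eq_card_basis vb]
  let e : Fin n ≃ t := (Fintype.equivFinOfCardEq hcard).symm
  let vB : Basis (Fin n) ℝ E := vb.reindex e.symm
  set v : Fin n → E := fun i => (e i : E) with hv
  have hvB : ⇑vB = v := by
    ext i
    simp [vB, vb, v, Basis.reindex_apply, Basis.mk_apply]
  -- the ℤ-basis of M
  let b0 := Module.Free.chooseBasis ℤ M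
  have hcard2 : Fintype.card (Module.Free.ChooseBasisIndex ℤ M) = n := by
    rw [← Module.finrank_eq_card_chooseBasisIndex, ZLattice.rank ℝ M]
  let b : Basis (Fin n) ℤ M := b0.reindex (Fintype.equivFinOfCardEq hcard2)
  let b' : Basis (Fin n) ℝ E := b.ofZLatticeBasis ℝ M
  -- Gram-Schmidt orthonormal basis from v
  have h' : finrank ℝ E = Fintype.card (Fin n) := by simp [hn]
  haveI : WellFoundedLT (Fin n) := Finite.to_wellFoundedLT
  let c : OrthonormalBasis (Fin n) ℝ E := InnerProductSpace.gramSchmidtOrthonormalBasis h' v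
  -- Hadamard's inequality
  have hHad : |c.toBasis.det v| ≤ 1 := by
    rw [InnerProductSpace.gramSchmidtOrthonormalBasis_det, Finset.abs_prod]
    calc ∏ i, |⟪c i, v i⟫| ≤ ∏ _i : Fin n, (1 : ℝ) := by
          refine Finset.prod_le_prod (fun i _ => abs_nonneg _) (fun i _ => ?_)
          calc |⟪c i, v i⟫| ≤ ‖c i‖ * ‖v i‖ := abs_real_inner_le_norm _ _
            _ = ‖v i‖ := by rw [c.orthonormal.1 i, one_mul]
            _ ≤ 1 := hnorm _ (hts (e i).2)
      _ = 1 := by simp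
  -- v takes values in M, with integral coordinate matrix w.r.t. b
  have hvM : ∀ i, v i ∈ M := fun i => hs ▸ Submodule.subset_span (hts (e i).2)
  let m : Fin n → M := fun i => ⟨v i, hvM i⟩
  let A : Matrix (Fin n) (Fin n) ℤ := Matrix.of fun i j => b.repr (m j) i
  have hmat : b'.toMatrix v = A.map (Int.cast : ℤ → ℝ) := by
    ext i j
    rw [Basis.toMatrix_apply, Matrix.map_apply]
    exact b.ofZLatticeBasis_repr_apply ℝ M (m j) i
  have hdet : b'.det v = (A.det : ℝ) := by
    rw [Basis.det_apply, hmat]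
    exact (RingHom.map_det (Int.castRingHom ℝ) A).symm
  have hvne : b'.det v ≠ 0 := by
    rw [← hvB]
    exact (b'.isUnit_det vB).ne_zero
  have hAdet : A.det ≠ 0 := by
    intro h
    exact hvne (by rw [hdet, h, Int.cast_zero])
  have h1le : (1 : ℝ) ≤ |b'.det v| := by
    rw [hdet, ← Int.cast_abs]
    exact_mod_cast Int.one_le_abs hAdet
  -- multiplicativity of determinants
  have hmul : c.toBasis.det v = c.toBasis.det ⇑b' * b'.det v := by
    rw [Basis.det_apply, Basis.det_apply, Basis.det_apply,
      ← Basis.toMatrix_mul_toMatrix c.toBasis b' v, Matrix.det_mul]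
  have hble : |c.toBasis.det ⇑b'| ≤ 1 := by
    have h2 : |c.toBasis.det ⇑b'| * |b'.det v| ≤ 1 := by
      rw [← abs_mul, ← hmul]; exact hHad
    calc |c.toBasis.det ⇑b'| = |c.toBasis.det ⇑b'| * 1 := (mul_one _).symm
      _ ≤ |c.toBasis.det ⇑b'| * |b'.det v| :=
          mul_le_mul_of_nonneg_left h1le (abs_nonneg _)
      _ ≤ 1 := h2
  -- compute the covolume
  rw [ZLattice.covolume_eq_det_mul_measureReal M volume b c.toBasis]
  have hcoe : ((↑) ∘ ⇑b : Fin n → E) = ⇑b' := funext fun i =>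
    (b.ofZLatticeBasis_apply ℝ M i).symm
  have hfd : (volume (ZSpan.fundamentalDomain c.toBasis)).toReal = 1 := by
    rw [measure_congr (ZSpan.fundamentalDomain_ae_parallelepiped c.toBasis volume),
      show parallelepiped ⇑c.toBasis = parallelepiped ⇑c by rw [c.coe_toBasis],
      c.volume_parallelepiped, ENNReal.toReal_one]
  rw [measureReal_def, hcoe, hfd, mul_one]
  exact hble

/-- If a `ℤ`-lattice `M` in a Euclidean space is generated by elements of norm at most `1`,
then `χ(M) = log(vol(unit ball)/covol(M)) ≥ log V(r)`, where `V(r)` is the volume of the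
unit ball in `ℝ^r` and `r = rank M`. -/
theorem chi_ge_log_unit_ball_volume
    {E : Type*} [NormedAddCommGroup E] [InnerProductSpace ℝ E] [FiniteDimensional ℝ E]
    [MeasurableSpace E] [BorelSpace E]
    (M : Submodule ℤ E) [DiscreteTopology M] [IsZLattice ℝ M]
    (hgen : ∃ s : Set E, Submodule.span ℤ s = M ∧ ∀ x ∈ s, ‖x‖ ≤ 1) :
    Real.log ((volume (Metric.ball (0 : E) 1)).toReal / ZLattice.covolume M) ≥
      Real.log
        ((volume (Metric.ball (0 : EuclideanSpace ℝ (Fin (finrank ℤ M))) 1)).toReal) := by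
  have key : ZLattice.covolume M ≤ 1 := covolume_le_one_of_gen M hgen
  have hc : 0 < ZLattice.covolume M := ZLattice.covolume_pos M volume
  have hrank : finrank ℤ M = finrank ℝ E := ZLattice.rank ℝ M
  have h1 : volume (Metric.ball (0 : E) 1) =
      volume (Metric.ball (0 : EuclideanSpace ℝ (Fin (finrank ℝ E))) 1) := by
    rw [← ((stdOrthonormalBasis ℝ E).measurePreserving_repr_symm).measure_preimage
      measurableSet_ball.nullMeasurableSet,
      LinearIsometryEquiv.preimage_ball, LinearIsometryEquiv.symm_symm, _root_.map_zero]
  rw [hrank, h1]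
  set V : ℝ := (volume (Metric.ball (0 : EuclideanSpace ℝ (Fin (finrank ℝ E))) 1)).toReal
    with hV
  have hVpos : 0 < V := by
    rw [hV]
    refine ENNReal.toReal_pos ?_ ?_
    · exact (Metric.measure_ball_pos volume _ one_pos).ne'
    · exact measure_ball_lt_top.ne
  rw [ge_iff_le, Real.log_div hVpos.ne' hc.ne']
  have hlog : Real.log (ZLattice.covolume M) ≤ 0 := Real.log_nonpos hc.le key
  linarith
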